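/- Let f be convex differentiable with minimizer x*, let f_k be differentiable with f - f_k being c-restricted smooth w.r.t. x*. Then for any points y^s and y⁰, -2⟨y^s - x*, ∇f_k(y^s) - ∇f_k(y⁰) + ∇f(y⁰)⟩ ≤ -2(f(y^s) - f(x*)) + 3c‖y^s - x*‖² + c‖y⁰ - x*‖². -/

import Mathlib

open InnerProductSpace
set_option maxHeartbeats 1000000

lemma grad_sub_aux {d : ℕ} (f fk : EuclideanSpace ℝ (Fin d) → ℝ)
    (hf : Differentiable ℝ f) (hfk : Differentiable ℝ fk) (y : EuclideanSpace ℝ (Fin d)) :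
    gradient (fun x => f x - fk x) y = gradient f y - gradient fk y := by
  have h1 := (hf y).hasGradientAt
  have h2 := (hfk y).hasGradientAt
  rw [hasGradientAt_iff_hasFDerivAt] at h1 h2
  have h3 : HasFDerivAt (fun x => f x - fk x)
      (toDual ℝ (EuclideanSpace ℝ (Fin d)) (gradient f y - gradient fk y)) y := by
    exact (h1.sub h2).congr_fderiv (map_sub _ _ _).symm
  rw [← hasGradientAt_iff_hasFDerivAt] at h3
  exact h3.gradient

lemma conv_grad_aux {d : ℕ} (f : EuclideanSpace ℝ (Fin d) → ℝ) (hf : Differentiable ℝ f)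
    (hconv : ConvexOn ℝ Set.univ f) (x y : EuclideanSpace ℝ (Fin d)) :
    f y - f x ≤ ⟪y - x, gradient f y⟫_ℝ := by
  set L : ℝ →ᵃ[ℝ] EuclideanSpace ℝ (Fin d) := AffineMap.lineMap x y with hL
  have hLt : ∀ t : ℝ, L t = t • (y - x) + x := by
    intro t; simp [hL, AffineMap.lineMap_apply]
  have hL0 : L (0 : ℝ) = x := by rw [hLt]; simp
  have hL1 : L (1 : ℝ) = y := by rw [hLt]; simp
  have hconvg : ConvexOn ℝ Set.univ (f ∘ L) := by
    have := hconv.comp_affineMap L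
    simpa using this
  have hline : ∀ t : ℝ, HasDerivAt (fun s : ℝ => L s) (y - x) t := by
    intro t
    have : HasDerivAt (fun s : ℝ => s • (y - x) + x) ((1 : ℝ) • (y - x)) t :=
      ((hasDerivAt_id t).smul_const (y - x)).add_const x
    simp only [one_smul] at this
    exact this.congr_deriv rfl |>.congr_of_eventuallyEq (by filter_upwards with s using (hLt s))
  have hd : HasDerivAt (f ∘ L) (⟪gradient f y, y - x⟫_ℝ) 1 := by
    have hg := (hf y).hasGradientAt
    rw [hasGradientAt_iff_hasFDerivAt] at hg
    have hg' : HasFDerivAt f (toDual ℝ (EuclideanSpace ℝ (Fin d)) (gradient f y)) (L 1) := by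
      rw [hL1]; exact hg
    have := hg'.comp_hasDerivAt 1 (hline 1)
    simpa [toDual_apply_apply] using this
  have hslope := hconvg.slope_le_of_hasDerivAt (Set.mem_univ (0 : ℝ)) (Set.mem_univ (1 : ℝ))
    zero_lt_one hd
  have : (f ∘ L) 1 - (f ∘ L) 0 ≤ ⟪gradient f y, y - x⟫_ℝ := by
    simpa [slope_def_field] using hslope
  rw [Function.comp_apply, Function.comp_apply, hL0, hL1] at this
  rw [real_inner_comm]
  exact this

/-- third supply-rate bound of Lemma 2 (convex case). -/
theorem statement7 {d : ℕ} (f fk : EuclideanSpace ℝ (Fin d) → ℝ) (c : ℝ) (hc : 0 ≤ c)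
    (hf : Differentiable ℝ f) (hconv : ConvexOn ℝ Set.univ f)
    (hfk : Differentiable ℝ fk)
    (xstar : EuclideanSpace ℝ (Fin d))
    (hmin : IsMinOn f Set.univ xstar) (hgrad0 : gradient f xstar = 0)
    (hr : ∀ y, ‖gradient (fun x => f x - fk x) xstar
        - gradient (fun x => f x - fk x) y‖ ≤ c * ‖xstar - y‖)
    (ys y0 : EuclideanSpace ℝ (Fin d)) :
    -2 * ⟪ys - xstar, gradient fk ys - gradient fk y0 + gradient f y0⟫_ℝ ≤
      -2 * (f ys - f xstar) + 3 * c * ‖ys - xstar‖ ^ 2 + c * ‖y0 - xstar‖ ^ 2 := by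
  have hgs : ∀ y, gradient (fun x => f x - fk x) y = gradient f y - gradient fk y :=
    fun y => grad_sub_aux f fk hf hfk y
  set A := ys - xstar with hA
  set B := y0 - xstar with hB
  set u := (gradient f xstar - gradient fk xstar) - (gradient f ys - gradient fk ys) with hu
  set v := (gradient f xstar - gradient fk xstar) - (gradient f y0 - gradient fk y0) with hv
  have h2 : ‖u‖ ≤ c * ‖A‖ := by
    have := hr ys
    rw [hgs, hgs] at this
    rwa [show ‖xstar - ys‖ = ‖A‖ from norm_sub_rev xstar ys] at this
  have h3 : ‖v‖ ≤ c * ‖B‖ := by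
    have := hr y0
    rw [hgs, hgs] at this
    rwa [show ‖xstar - y0‖ = ‖B‖ from norm_sub_rev xstar y0] at this
  have h1 : f ys - f xstar ≤ ⟪A, gradient f ys⟫_ℝ := conv_grad_aux f hf hconv xstar ys
  have key : ⟪A, gradient fk ys - gradient fk y0 + gradient f y0⟫_ℝ
      = ⟪A, gradient f ys⟫_ℝ + ⟪A, u⟫_ℝ - ⟪A, v⟫_ℝ := by
    rw [← inner_add_right, ← inner_sub_right]
    congr 1
    rw [hu, hv]
    abel
  have cs2 : |⟪A, u⟫_ℝ| ≤ ‖A‖ * ‖u‖ := abs_real_inner_le_norm A u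
  have cs3 : |⟪A, v⟫_ℝ| ≤ ‖A‖ * ‖v‖ := abs_real_inner_le_norm A v
  have hbu : -⟪A, u⟫_ℝ ≤ c * ‖A‖ * ‖A‖ := by
    have : -⟪A, u⟫_ℝ ≤ ‖A‖ * ‖u‖ := by
      have := neg_abs_le (⟪A, u⟫_ℝ); nlinarith
    nlinarith [norm_nonneg A]
  have hbv : ⟪A, v⟫_ℝ ≤ ‖A‖ * (c * ‖B‖) := by
    have : ⟪A, v⟫_ℝ ≤ ‖A‖ * ‖v‖ := (le_abs_self _).trans cs3
    nlinarith [norm_nonneg A]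
  rw [key]
  have hab : ‖A‖ * (c * ‖B‖) ≤ c / 2 * (‖A‖ ^ 2 + ‖B‖ ^ 2) := by
    nlinarith [sq_nonneg (‖A‖ - ‖B‖)]
  nlinarith [norm_nonneg A, norm_nonneg B]
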